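/- arXiv:2605.18619 — 4 statements merged into one kernel-verified Lean document; each statement's English description precedes it below -/
import Mathlib

section
/- Let G = (V, E) be a finite connected simple graph with positive edge weights w(e) > 0, incidence matrix D, weight matrix W = diag(w(e)), and weighted graph Laplacian L = Dᵀ W² D. Fix a root vertex r ∈ V and λ > 0, and let e_r ∈ ℝ^V be the standard basis vector supported on r. Then det(L + λ² e_r e_rᵀ) = λ² · Σ_{T ∈ 𝒯(G)} Π_{e ∈ T} w(e)². -/
open Matrix MeasureTheory
open scoped BigOperators Classical

noncomputable section

/-- Incidence (finite difference) matrix of an oriented edge set: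
`D e v = 1` if `v` is the head of `e`, `-1` if `v` is the tail, `0` otherwise. -/
def incMatrix {V E : Type*} [DecidableEq V] (head tail : E → V) : Matrix E V ℝ :=
  Matrix.of fun e v => if v = head e then 1 else if v = tail e then -1 else 0

/-- The simple graph on `V` whose adjacency comes from the edges in `s`. -/
def graphOf {V E : Type*} (head tail : E → V) (s : Set E) : SimpleGraph V :=
  SimpleGraph.fromRel fun v₁ v₂ => ∃ e ∈ s, head e = v₁ ∧ tail e = v₂

/-- A set of edges forms a spanning tree: the resulting spanning subgraph is
connected and acyclic. -/
def IsSpanningTree {V E : Type*} (head tail : E → V) (s : Finset E) : Prop :=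
  (graphOf head tail (↑s : Set E)).Connected ∧ (graphOf head tail (↑s : Set E)).IsAcyclic

set_option linter.unusedSectionVars false
set_option linter.unusedVariables false

namespace MTT

variable {V E : Type*} [Fintype V] [DecidableEq V] [Fintype E] [DecidableEq E]

/-- Integer incidence matrix. -/
def incZ (head tail : E → V) : Matrix E V ℤ :=
  Matrix.of fun e v => if v = head e then 1 else if v = tail e then -1 else 0

lemma incMatrix_eq_cast (head tail : E → V) (e : E) (v : V) :
    incMatrix head tail e v = ((incZ head tail e v : ℤ) : ℝ) := by
  simp only [incMatrix, incZ, Matrix.of_apply]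
  split_ifs <;> simp

section flow

variable {head tail : E → V} {s : Set E}

lemma adj_iff {a c : V} :
    (graphOf head tail s).Adj a c ↔ a ≠ c ∧
      ((∃ e, e ∈ s ∧ head e = a ∧ tail e = c) ∨ ∃ e, e ∈ s ∧ head e = c ∧ tail e = a) := by
  simp [graphOf, SimpleGraph.fromRel_adj]

/-- The signed unit flow of a single step of a walk. -/
def stepFlow {a c : V} (h : (graphOf head tail s).Adj a c) : E → ℤ :=
  if hx : ∃ e, e ∈ s ∧ head e = c ∧ tail e = a then Pi.single hx.choose 1
  else Pi.single (((adj_iff.1 h).2.resolve_right hx)).choose (-1)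

lemma stepFlow_apply_ne {a c : V} (h : (graphOf head tail s).Adj a c) (e : E)
    (hne : stepFlow h e ≠ 0) : e ∈ s ∧ s(head e, tail e) = s(a, c) := by
  unfold stepFlow at hne
  split_ifs at hne with hx
  · rcases eq_or_ne e hx.choose with rfl | hd
    · obtain ⟨h1, h2, h3⟩ := hx.choose_spec
      exact ⟨h1, by rw [h2, h3, Sym2.eq_swap]⟩
    · exact absurd (Pi.single_eq_of_ne hd _) hne
  · set hy := (adj_iff.1 h).2.resolve_right hx with hhy
    rcases eq_or_ne e hy.choose with rfl | hd
    · obtain ⟨h1, h2, h3⟩ := hy.choose_spec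
      exact ⟨h1, by rw [h2, h3]⟩
    · exact absurd (Pi.single_eq_of_ne hd _) hne

lemma single_mul_sum (e₀ : E) (z : ℤ) (F : E → ℤ) :
    ∑ e, (Pi.single e₀ z : E → ℤ) e * F e = z * F e₀ := by
  rw [Finset.sum_eq_single e₀]
  · simp
  · intro b _ hb; rw [Pi.single_eq_of_ne hb, zero_mul]
  · intro hb; exact absurd (Finset.mem_univ _) hb

lemma stepFlow_sum {a c : V} (h : (graphOf head tail s).Adj a c)
    (hnetr : ∀ e, head e ≠ tail e) (u : V) :
    ∑ e, stepFlow h e * incZ head tail e u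
      = (if u = c then 1 else 0) - (if u = a then 1 else 0) := by
  have hac : a ≠ c := (adj_iff.1 h).1
  unfold stepFlow
  by_cases hx : ∃ e, e ∈ s ∧ head e = c ∧ tail e = a
  · rw [dif_pos hx]
    obtain ⟨h1, h2, h3⟩ := hx.choose_spec
    rw [single_mul_sum, one_mul, incZ, Matrix.of_apply, h2, h3]
    split_ifs <;> simp_all
  · rw [dif_neg hx]
    obtain ⟨h1, h2, h3⟩ := ((adj_iff.1 h).2.resolve_right hx).choose_spec
    rw [single_mul_sum, incZ, Matrix.of_apply, h2, h3]
    split_ifs <;> simp_all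

/-- The flow an edge e carries along a walk. -/
def wflow {a b : V} : (graphOf head tail s).Walk a b → E → ℤ
  | SimpleGraph.Walk.nil => 0
  | SimpleGraph.Walk.cons h p => stepFlow h + wflow p

@[simp] lemma wflow_nil {a : V} : wflow (SimpleGraph.Walk.nil : (graphOf head tail s).Walk a a) = 0 := rfl

@[simp] lemma wflow_cons {a c b : V} (h : (graphOf head tail s).Adj a c)
    (p : (graphOf head tail s).Walk c b) :
    wflow (SimpleGraph.Walk.cons h p) = stepFlow h + wflow p := rfl

lemma wflow_support {a b : V} (p : (graphOf head tail s).Walk a b) (e : E) (he : e ∉ s) :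
    wflow p e = 0 := by
  induction p with
  | nil => rfl
  | cons h p ih =>
      show stepFlow h e + wflow p e = 0
      rw [ih, add_zero]
      by_contra hne
      exact he (stepFlow_apply_ne h e hne).1

lemma wflow_support' {a b : V} (p : (graphOf head tail s).Walk a b) (e : E)
    (he : s(head e, tail e) ∉ p.edges) : wflow p e = 0 := by
  induction p with
  | nil => rfl
  | cons h p ih =>
      rw [SimpleGraph.Walk.edges_cons, List.mem_cons] at he
      push_neg at he
      show stepFlow h e + wflow p e = 0
      rw [ih he.2, add_zero]
      by_contra hne
      exact he.1 (stepFlow_apply_ne h e hne).2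

lemma wflow_sum {a b : V} (hnetr : ∀ e, head e ≠ tail e)
    (p : (graphOf head tail s).Walk a b) (u : V) :
    ∑ e, wflow p e * incZ head tail e u
      = (if u = b then 1 else 0) - (if u = a then 1 else 0) := by
  induction p with
  | nil => simp
  | @cons a c b h p ih =>
      show ∑ e, (stepFlow h e + wflow p e) * incZ head tail e u = _
      simp only [add_mul, Finset.sum_add_distrib]
      rw [ih, stepFlow_sum h hnetr u]
      ring

end flow

section det

variable {head tail : E → V} {r : V}

/-- sum of cast incidence against a vector -/
lemma incZ_dot (hne : ∀ e, head e ≠ tail e) (e : E) (y : V → ℝ) :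
    ∑ u, ((incZ head tail e u : ℤ) : ℝ) * y u = y (head e) - y (tail e) := by
  have key : ∀ u, ((incZ head tail e u : ℤ) : ℝ) * y u
      = (if u = head e then y u else 0) - (if u = tail e then y u else 0) := by
    intro u
    simp only [incZ, Matrix.of_apply]
    split_ifs with p q q
    · exact absurd (p.symm.trans q) (hne e)
    · push_cast; ring
    · push_cast; ring
    · push_cast; ring
  rw [Finset.sum_congr rfl (fun u _ => key u), Finset.sum_sub_distrib,
    Finset.sum_ite_eq' Finset.univ (head e) y, Finset.sum_ite_eq' Finset.univ (tail e) y]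
  simp

/-- The square matrix extracted from the integer incidence matrix by a bijection
between non-root vertices and the edges of `s`. -/
def Bmat (head tail : E → V) (s : Finset E)
    (g : {v : V // v ≠ r} ≃ {e : E // e ∈ s}) :
    Matrix {v : V // v ≠ r} {v : V // v ≠ r} ℤ :=
  Matrix.of fun x u => incZ head tail (g x) u

lemma sum_subtype_eq (F : E → ℤ) (s : Finset E) (hF : ∀ e ∉ s, F e = 0)
    (g : {v : V // v ≠ r} ≃ {e : E // e ∈ s}) :
    ∑ x : {v : V // v ≠ r}, F (g x) = ∑ e : E, F e := by
  rw [Equiv.sum_comp g (fun e => F (e : E))]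
  rw [Finset.sum_coe_sort s F]
  exact Finset.sum_subset (Finset.subset_univ s) (fun e _ he => hF e he)

/-- Tree case: determinant squared is one. -/
lemma det_sq_eq_one (hne : ∀ e, head e ≠ tail e) (s : Finset E)
    (hconn : (graphOf head tail (↑s : Set E)).Connected)
    (g : {v : V // v ≠ r} ≃ {e : E // e ∈ s}) :
    (Bmat head tail s g).det ^ 2 = 1 := by
  classical
  set P : Matrix {v : V // v ≠ r} {v : V // v ≠ r} ℤ :=
    Matrix.of fun v x => wflow ((hconn.preconnected r v.val).some) ((g x : E)) with hP
  have hPB : P * Bmat head tail s g = 1 := by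
    ext v u
    rw [Matrix.mul_apply]
    have h2 := sum_subtype_eq (r := r)
      (fun e => wflow ((hconn.preconnected r v.val).some) e * incZ head tail e u) s
      (fun e he => by show wflow _ e * incZ head tail e _ = 0; rw [wflow_support _ e he, zero_mul]) g
    refine Eq.trans h2 ?_
    rw [wflow_sum hne]
    have hur : ¬ (u : V) = r := u.2
    rw [if_neg hur, sub_zero, Matrix.one_apply]
    by_cases h : v = u
    · rw [if_pos (congrArg Subtype.val h.symm), if_pos h]
    · rw [if_neg (fun hh => h (Subtype.ext hh.symm)), if_neg h]
  have hdet : (Bmat head tail s g).det * P.det = 1 := by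
    rw [mul_comm, ← Matrix.det_mul, hPB, Matrix.det_one]
  rcases Int.isUnit_iff.1 (IsUnit.of_mul_eq_one _ hdet) with h | h <;> rw [h] <;> ring

/-- the chosen edge of a step carries unit flow -/
lemma stepFlow_exists {s : Set E} {a c : V} (h : (graphOf head tail s).Adj a c) :
    ∃ e, e ∈ s ∧ s(head e, tail e) = s(a, c) ∧ (stepFlow h e = 1 ∨ stepFlow h e = -1) := by
  unfold stepFlow
  by_cases hx : ∃ e, e ∈ s ∧ head e = c ∧ tail e = a
  · obtain ⟨h1, h2, h3⟩ := hx.choose_spec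
    rw [dif_pos hx]
    exact ⟨hx.choose, h1, by rw [h2, h3, Sym2.eq_swap], Or.inl (by simp)⟩
  · rw [dif_neg hx]
    obtain ⟨h1, h2, h3⟩ := ((adj_iff.1 h).2.resolve_right hx).choose_spec
    exact ⟨_, h1, by rw [h2, h3], Or.inr (by simp)⟩

/-- Non-tree case: real determinant vanishes. -/
lemma det_eq_zero (hne : ∀ e, head e ≠ tail e) (s : Finset E)
    (hnt : ¬ IsSpanningTree head tail s)
    (g : {v : V // v ≠ r} ≃ {e : E // e ∈ s}) :
    ((Bmat head tail s g).map (fun z : ℤ => (z : ℝ))).det = 0 := by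
  classical
  set M := (Bmat head tail s g).map (fun z : ℤ => (z : ℝ)) with hM
  by_cases hc : (graphOf head tail (↑s : Set E)).Connected
  · -- there is a cycle
    have hnac : ¬ (graphOf head tail (↑s : Set E)).IsAcyclic := fun h => hnt ⟨hc, h⟩
    rw [SimpleGraph.IsAcyclic] at hnac
    push_neg at hnac
    obtain ⟨v, c, hcyc⟩ := hnac
    obtain ⟨x', h1, p, rfl⟩ : ∃ (x' : V) (h1 : (graphOf head tail (↑s : Set E)).Adj v x')
        (p : (graphOf head tail (↑s : Set E)).Walk x' v), c = SimpleGraph.Walk.cons h1 p := by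
      cases c with
      | nil => exact absurd rfl hcyc.ne_nil
      | cons h p => exact ⟨_, h, p, rfl⟩
    set c := SimpleGraph.Walk.cons h1 p with hcdef
    -- flow along the cycle: a nonzero vector in the left kernel
    set z : {v : V // v ≠ r} → ℝ := fun x => ((wflow c (g x : E) : ℤ) : ℝ) with hz
    have hker : Matrix.vecMul z M = 0 := by
      funext u
      rw [Matrix.vecMul, Pi.zero_apply]
      show ∑ x, z x * M x u = 0
      have h2 := sum_subtype_eq (r := r)
        (fun e => wflow c e * incZ head tail e u) s
        (fun e he => by show wflow _ e * incZ head tail e _ = 0; rw [wflow_support _ e he, zero_mul]) g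
      have h3 : ∑ x, z x * M x u
          = ((∑ x : {v : V // v ≠ r},
              wflow c ((g x : E)) * incZ head tail ((g x : E)) u : ℤ) : ℝ) := by
        rw [Int.cast_sum]
        refine Finset.sum_congr rfl fun x _ => ?_
        simp only [hz, hM, Bmat, Matrix.map_apply, Matrix.of_apply]
        push_cast
        ring
      rw [h3, h2, wflow_sum hne, sub_self, Int.cast_zero]
    -- z is nonzero
    obtain ⟨e₀, he₀, hedge, hval⟩ := stepFlow_exists h1
    have hpz : wflow p e₀ = 0 := by
      refine wflow_support' p e₀ ?_
      have hnd := hcyc.edges_nodup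
      rw [hcdef, SimpleGraph.Walk.edges_cons, List.nodup_cons] at hnd
      rw [hedge]
      exact hnd.1
    have hcz : wflow c e₀ = stepFlow h1 e₀ + wflow p e₀ := rfl
    have hne0 : wflow c e₀ ≠ 0 := by
      rw [hcz, hpz, add_zero]
      rcases hval with h | h <;> rw [h] <;> norm_num
    by_contra hdet
    have hz0 := Matrix.eq_zero_of_vecMul_eq_zero hdet hker
    have he₀s : e₀ ∈ s := he₀
    have : z (g.symm ⟨e₀, he₀s⟩) = 0 := by rw [hz0]; rfl
    rw [hz] at this
    simp only [Equiv.apply_symm_apply] at this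
    exact hne0 (by exact_mod_cast this)
  · -- disconnected: indicator of component of some vertex not reachable from root
    have hprec : ¬ (graphOf head tail (↑s : Set E)).Preconnected := by
      intro hp
      have : Nonempty V := ⟨r⟩
      exact hc ⟨hp⟩
    have hv0 : ∃ v₀, ¬ (graphOf head tail (↑s : Set E)).Reachable r v₀ := by
      by_contra hall
      push_neg at hall
      exact hprec fun a b => (hall a).symm.trans (hall b)
    obtain ⟨v₀, hv₀⟩ := hv0
    have hv₀r : v₀ ≠ r := fun h => hv₀ (h ▸ (⟨SimpleGraph.Walk.nil⟩ : (graphOf head tail (↑s : Set E)).Reachable r r))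
    set y : V → ℝ := fun u => if (graphOf head tail (↑s : Set E)).Reachable v₀ u then 1 else 0
      with hy
    have hyr : y r = 0 := by
      rw [hy]; exact if_neg (fun h => hv₀ h.symm)
    set x : {v : V // v ≠ r} → ℝ := fun u => y u.val with hx
    have hker : Matrix.mulVec M x = 0 := by
      funext q
      rw [Matrix.mulVec, Pi.zero_apply]
      show ∑ u, M q u * x u = 0
      have hsub : ∀ u : V, u ∈ Finset.univ.erase r ↔ u ≠ r := by
        intro u; rw [Finset.mem_erase]; simp
      have h1 : ∑ u : {v : V // v ≠ r}, M q u * x u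
          = ∑ u ∈ Finset.univ.erase r, ((incZ head tail (g q) u : ℤ) : ℝ) * y u := by
        rw [Finset.sum_subtype (Finset.univ.erase r) hsub
          (fun u => ((incZ head tail (g q) u : ℤ) : ℝ) * y u)]
        rfl
      have h2 : ∑ u ∈ Finset.univ.erase r, ((incZ head tail (g q) u : ℤ) : ℝ) * y u
          = ∑ u : V, ((incZ head tail (g q) u : ℤ) : ℝ) * y u := by
        refine Finset.sum_erase _ ?_
        rw [hyr, mul_zero]
      rw [h1, h2, incZ_dot hne]
      have hadj : (graphOf head tail (↑s : Set E)).Adj (head (g q)) (tail (g q)) :=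
        adj_iff.2 ⟨hne _, Or.inl ⟨(g q : E), (g q).2, rfl, rfl⟩⟩
      have : y (head ((g q : E))) = y (tail ((g q : E))) := by
        simp only [hy]
        by_cases hr : (graphOf head tail (↑s : Set E)).Reachable v₀ (head (g q))
        · rw [if_pos hr, if_pos (hr.trans hadj.reachable)]
        · rw [if_neg hr, if_neg (fun hh => hr (hh.trans hadj.symm.reachable))]
      rw [this, sub_self]
    by_contra hdet
    have hx0 := Matrix.eq_zero_of_mulVec_eq_zero hdet hker
    have : x ⟨v₀, hv₀r⟩ = 0 := by rw [hx0]; rfl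
    rw [hx] at this
    simp only [hy] at this
    rw [if_pos (SimpleGraph.Reachable.refl v₀)] at this
    exact one_ne_zero this

end det

section cauchy

variable {K : Type*} [Fintype K] [DecidableEq K]

/-- Expansion of `det (Nᵀ * N)` by multilinearity over row choices. -/
lemma cauchy_expand (N : Matrix E K ℝ) :
    (Nᵀ * N).det = ∑ f : K → E, (∏ u, N (f u) u) * (N.submatrix f id).det := by
  have h : (Nᵀ * N) = Matrix.of fun u => ∑ e : E, N e u • (fun w => N e w) := by
    ext u v
    rw [Matrix.mul_apply, Matrix.of_apply, Finset.sum_apply]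
    simp [Matrix.transpose_apply, smul_eq_mul]
  rw [h]
  have h2 := (Matrix.detRowAlternating :
      (K → ℝ) [⋀^K]→ₗ[ℝ] ℝ).toMultilinearMap.map_sum
      (g := fun u (e : E) => N e u • (fun w => N e w))
  have h3 : ∀ f : K → E,
      (Matrix.detRowAlternating : (K → ℝ) [⋀^K]→ₗ[ℝ] ℝ).toMultilinearMap
        (fun u => N (f u) u • (fun w => N (f u) w))
      = (∏ u, N (f u) u) * (N.submatrix f id).det := by
    intro f
    rw [(Matrix.detRowAlternating :
      (K → ℝ) [⋀^K]→ₗ[ℝ] ℝ).toMultilinearMap.map_smul_univ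
      (fun u => N (f u) u) (fun u w => N (f u) w), smul_eq_mul]
    rfl
  exact h2.trans (Finset.sum_congr rfl fun f _ => h3 f)

end cauchy

section count

variable {head tail : E → V}

lemma edgeFinset_eq (hne : ∀ e, head e ≠ tail e) (s : Finset E) :
    (graphOf head tail (↑s : Set E)).edgeFinset
      = s.image (fun e => s(head e, tail e)) := by
  ext q
  induction q with
  | _ a b =>
    rw [SimpleGraph.mem_edgeFinset, SimpleGraph.mem_edgeSet, Finset.mem_image]
    constructor
    · intro hadj
      rcases (adj_iff.1 hadj).2 with ⟨e, hes, h1, h2⟩ | ⟨e, hes, h1, h2⟩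
      · exact ⟨e, hes, by rw [h1, h2]⟩
      · exact ⟨e, hes, by rw [h1, h2, Sym2.eq_swap]⟩
    · rintro ⟨e, hes, heq⟩
      rcases Sym2.eq_iff.1 heq with ⟨h1, h2⟩ | ⟨h1, h2⟩
      · exact adj_iff.2 ⟨by rw [← h1, ← h2]; exact hne e, Or.inl ⟨e, hes, h1, h2⟩⟩
      · exact adj_iff.2 ⟨by rw [← h1, ← h2]; exact (hne e).symm, Or.inr ⟨e, hes, h1, h2⟩⟩

lemma tree_card (hne : ∀ e, head e ≠ tail e)
    (hinj : ∀ e₁ e₂, s(head e₁, tail e₁) = s(head e₂, tail e₂) → e₁ = e₂)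
    (s : Finset E) (hst : IsSpanningTree head tail s) :
    s.card + 1 = Fintype.card V := by
  have hG : (graphOf head tail (↑s : Set E)).IsTree := ⟨hst.1, hst.2⟩
  have h1 := hG.card_edgeFinset
  rw [edgeFinset_eq hne s, Finset.card_image_of_injective _ (fun a b => hinj a b)] at h1
  exact h1

lemma card_V' (r : V) : Fintype.card {v : V // v ≠ r} + 1 = Fintype.card V := by
  classical
  have h1 : Fintype.card {v : V // v = r} = 1 := Fintype.card_subtype_eq r
  have := Fintype.card_subtype_compl (fun v : V => v = r)
  rw [h1] at this
  have h2 : Fintype.card {v : V // ¬ v = r} = Fintype.card {v : V // v ≠ r} := rfl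
  rw [h2] at this
  rw [this]
  have h3 : 1 ≤ Fintype.card V := by
    have : Nonempty V := ⟨r⟩
    exact Fintype.card_pos
  omega

end count

section fiber

variable {head tail : E → V} {r : V}

/-- Weighted incidence matrix with root column removed. -/
def Nmat (head tail : E → V) (w : E → ℝ) (r : V) : Matrix E {v : V // v ≠ r} ℝ :=
  Matrix.of fun e u => w e * incMatrix head tail e u.val

lemma Nsub_factor (w : E → ℝ) (s : Finset E) (f : {v : V // v ≠ r} → E)
    (hmem : ∀ u, f u ∈ s) (g : {v : V // v ≠ r} ≃ {e : E // e ∈ s})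
    (hg : ∀ u, (g u : E) = f u) :
    (Nmat head tail w r).submatrix f id
      = Matrix.diagonal (fun u => w (f u))
          * ((Bmat head tail s g).map (fun z : ℤ => (z : ℝ))) := by
  ext u v
  rw [Matrix.diagonal_mul, Matrix.submatrix_apply, Matrix.map_apply, id_eq]
  show w (f u) * incMatrix head tail (f u) v.val = _
  rw [incMatrix_eq_cast]
  show _ = w (f u) * ((incZ head tail ((g u : E)) v.val : ℤ) : ℝ)
  rw [hg u]

/-- non-spanning-tree fibers contribute zero. -/
lemma fiber_nontree (hne : ∀ e, head e ≠ tail e) (w : E → ℝ) (s : Finset E)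
    (hnt : ¬ IsSpanningTree head tail s) :
    ∑ f ∈ Finset.univ.filter
        (fun f : {v : V // v ≠ r} → E => Finset.image f Finset.univ = s),
      (∏ u, Nmat head tail w r (f u) u)
        * ((Nmat head tail w r).submatrix f id).det = 0 := by
  classical
  refine Finset.sum_eq_zero fun f hf => ?_
  rw [Finset.mem_filter] at hf
  have himg := hf.2
  by_cases hfi : Function.Injective f
  · -- injective: use det_eq_zero
    have hmem : ∀ u, f u ∈ s := fun u => by
      rw [← himg]; exact Finset.mem_image_of_mem f (Finset.mem_univ u)
    set φ : {v : V // v ≠ r} → {e : E // e ∈ s} := fun u => ⟨f u, hmem u⟩ with hφ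
    have hφinj : Function.Injective φ := fun a b hab =>
      hfi (congrArg Subtype.val hab)
    have hφsurj : Function.Surjective φ := by
      rintro ⟨e, he⟩
      rw [← himg] at he
      obtain ⟨u, -, hu⟩ := Finset.mem_image.1 he
      exact ⟨u, Subtype.ext hu⟩
    set g := Equiv.ofBijective φ ⟨hφinj, hφsurj⟩ with hgdef
    have hg : ∀ u, (g u : E) = f u := fun u => rfl
    rw [Nsub_factor w s f hmem g hg, Matrix.det_mul, det_eq_zero hne s hnt g,
      mul_zero, mul_zero]
  · -- non-injective: repeated rows
    rw [Function.not_injective_iff] at hfi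
    obtain ⟨a, b, hab, hne'⟩ := hfi
    have : ((Nmat head tail w r).submatrix f id).det = 0 := by
      refine Matrix.det_zero_of_row_eq hne' ?_
      funext v
      rw [Matrix.submatrix_apply, Matrix.submatrix_apply, hab]
    rw [this, mul_zero]

/-- spanning tree fibers contribute the squared weight product. -/
lemma fiber_tree (hne : ∀ e, head e ≠ tail e)
    (hinj : ∀ e₁ e₂, s(head e₁, tail e₁) = s(head e₂, tail e₂) → e₁ = e₂)
    (w : E → ℝ) (s : Finset E) (hst : IsSpanningTree head tail s) :
    ∑ f ∈ Finset.univ.filter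
        (fun f : {v : V // v ≠ r} → E => Finset.image f Finset.univ = s),
      (∏ u, Nmat head tail w r (f u) u)
        * ((Nmat head tail w r).submatrix f id).det
      = ∏ e ∈ s, w e ^ 2 := by
  classical
  have hcard : s.card = Fintype.card {v : V // v ≠ r} := by
    have h1 := tree_card hne hinj s hst
    have h2 := card_V' r
    omega
  have hcard' : Fintype.card {v : V // v ≠ r} = Fintype.card {e : E // e ∈ s} := by
    rw [Fintype.card_coe]; omega
  set g0 := Fintype.equivOfCardEq hcard' with hg0
  set M0 := (Nmat head tail w r).submatrix (fun u => (g0 u : E)) id with hM0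
  -- the fiber is the image of the permutations
  have key : ∑ σ : Equiv.Perm {v : V // v ≠ r},
        (∏ u, Nmat head tail w r ((g0 (σ u) : E)) u)
          * ((Nmat head tail w r).submatrix (fun u => (g0 (σ u) : E)) id).det
      = ∑ f ∈ Finset.univ.filter
          (fun f : {v : V // v ≠ r} → E => Finset.image f Finset.univ = s),
        (∏ u, Nmat head tail w r (f u) u)
          * ((Nmat head tail w r).submatrix f id).det := by
    have hi : ∀ (σ : Equiv.Perm {v : V // v ≠ r}) (hσ : σ ∈ (Finset.univ : Finset (Equiv.Perm {v : V // v ≠ r}))),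
        (fun u => (g0 (σ u) : E)) ∈ Finset.univ.filter
          (fun f : {v : V // v ≠ r} → E => Finset.image f Finset.univ = s) := by
      intro σ _
      rw [Finset.mem_filter]
      refine ⟨Finset.mem_univ _, ?_⟩
      ext e
      rw [Finset.mem_image]
      constructor
      · rintro ⟨u, -, rfl⟩; exact (g0 (σ u)).2
      · intro he
        exact ⟨σ.symm (g0.symm ⟨e, he⟩), Finset.mem_univ _, by simp⟩
    have iinj : ∀ (σ₁ : Equiv.Perm {v : V // v ≠ r}) (h₁ : σ₁ ∈ (Finset.univ : Finset (Equiv.Perm {v : V // v ≠ r})))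
        (σ₂ : Equiv.Perm {v : V // v ≠ r}) (h₂ : σ₂ ∈ (Finset.univ : Finset (Equiv.Perm {v : V // v ≠ r}))),
        (fun u => (g0 (σ₁ u) : E)) = (fun u => (g0 (σ₂ u) : E)) → σ₁ = σ₂ := by
      intro σ₁ _ σ₂ _ h
      ext u
      have := congrFun h u
      exact congrArg Subtype.val (g0.injective (Subtype.ext this))
    have isurj : ∀ f ∈ Finset.univ.filter
          (fun f : {v : V // v ≠ r} → E => Finset.image f Finset.univ = s),
        ∃ (σ : Equiv.Perm {v : V // v ≠ r}) (hσ : σ ∈ (Finset.univ : Finset (Equiv.Perm {v : V // v ≠ r}))),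
          (fun u => (g0 (σ u) : E)) = f := by
      intro f hf
      rw [Finset.mem_filter] at hf
      have himg := hf.2
      have hfi : Function.Injective f := by
        have hinjOn := Finset.injOn_of_card_image_eq (s := Finset.univ) (f := f)
          (by rw [himg, hcard, Finset.card_univ])
        intro a b hab
        exact hinjOn (Finset.mem_coe.2 (Finset.mem_univ a))
          (Finset.mem_coe.2 (Finset.mem_univ b)) hab
      have hmem : ∀ u, f u ∈ s := fun u => by
        rw [← himg]; exact Finset.mem_image_of_mem f (Finset.mem_univ u)
      set φ : {v : V // v ≠ r} → {e : E // e ∈ s} := fun u => ⟨f u, hmem u⟩ with hφ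
      have hφbij : Function.Bijective φ := by
        refine (Fintype.bijective_iff_injective_and_card φ).2 ⟨?_, hcard'⟩
        intro a b hab
        exact hfi (congrArg Subtype.val hab)
      refine ⟨(Equiv.ofBijective φ hφbij).trans g0.symm, Finset.mem_univ _, ?_⟩
      funext u
      simp [hφ]
    exact Finset.sum_bij (fun σ _ => fun u => (g0 (σ u) : E)) hi iinj isurj (fun σ hσ => rfl)
  rw [← key]
  have hperm : ∀ σ : Equiv.Perm {v : V // v ≠ r},
      ((Nmat head tail w r).submatrix (fun u => (g0 (σ u) : E)) id).det
        = (Equiv.Perm.sign σ : ℝ) * M0.det := by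
    intro σ
    have : (Nmat head tail w r).submatrix (fun u => (g0 (σ u) : E)) id
        = M0.submatrix σ id := by
      ext u v; rfl
    rw [this, Matrix.det_permute]
  have hstep : ∀ σ : Equiv.Perm {v : V // v ≠ r},
      (∏ u, Nmat head tail w r ((g0 (σ u) : E)) u)
          * ((Nmat head tail w r).submatrix (fun u => (g0 (σ u) : E)) id).det
      = ((Equiv.Perm.sign σ : ℝ) * ∏ u, M0 (σ u) u) * M0.det := by
    intro σ
    rw [hperm σ]
    have : (∏ u, Nmat head tail w r ((g0 (σ u) : E)) u) = ∏ u, M0 (σ u) u := by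
      refine Finset.prod_congr rfl fun u _ => rfl
    rw [this]; ring
  rw [Finset.sum_congr rfl fun σ _ => hstep σ, ← Finset.sum_mul, ← Matrix.det_apply']
  -- now `det M0 * det M0`
  have hmem : ∀ u : {v : V // v ≠ r}, (g0 u : E) ∈ s := fun u => (g0 u).2
  have hcast : ((Bmat head tail s g0).map (fun z : ℤ => (z : ℝ))).det
      = (((Bmat head tail s g0).det : ℤ) : ℝ) :=
    ((Int.castRingHom ℝ).map_det (Bmat head tail s g0)).symm
  have hB : ((Bmat head tail s g0).map (fun z : ℤ => (z : ℝ))).det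
      * ((Bmat head tail s g0).map (fun z : ℤ => (z : ℝ))).det = 1 := by
    rw [hcast, ← Int.cast_mul, ← pow_two, det_sq_eq_one hne s hst.1 g0, Int.cast_one]
  have hprodw : ∏ u : {v : V // v ≠ r}, w ((g0 u : E)) = ∏ e ∈ s, w e := by
    rw [← Finset.prod_coe_sort s w]
    exact Equiv.prod_comp g0 (fun e' => w (e' : E))
  rw [hM0, Nsub_factor w s (fun u => (g0 u : E)) hmem g0 (fun u => rfl), Matrix.det_mul,
    Matrix.det_diagonal, hprodw]
  rw [show ∀ a b : ℝ, (a * b) * (a * b) = (a * a) * (b * b) from fun a b => by ring, hB,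
    mul_one, ← pow_two, ← Finset.prod_pow]
  
end fiber

section reduce

variable {head tail : E → V}

lemma NtN_apply (w : E → ℝ) (r : V) (u v : {v : V // v ≠ r}) :
    ((Nmat head tail w r)ᵀ * Nmat head tail w r) u v
      = ((incMatrix head tail)ᵀ * Matrix.diagonal (fun e => w e ^ 2)
          * incMatrix head tail) u.val v.val := by
  rw [Matrix.mul_apply, Matrix.mul_apply]
  refine Finset.sum_congr rfl fun e _ => ?_
  rw [Matrix.mul_diagonal, Matrix.transpose_apply, Matrix.transpose_apply]
  show (w e * incMatrix head tail e u.val) * (w e * incMatrix head tail e v.val) = _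
  ring

lemma reduce_det (hne : ∀ e, head e ≠ tail e) (w : E → ℝ) (r : V) (lam : ℝ) :
    ((incMatrix head tail)ᵀ * Matrix.diagonal (fun e => w e ^ 2) * incMatrix head tail
        + Matrix.single r r (lam ^ 2)).det
      = lam ^ 2 * ((Nmat head tail w r)ᵀ * Nmat head tail w r).det := by
  classical
  set L := (incMatrix head tail)ᵀ * Matrix.diagonal (fun e => w e ^ 2) * incMatrix head tail
    with hL
  have h1 : L + Matrix.single r r (lam ^ 2)
      = Matrix.updateRow L r (L r + lam ^ 2 • (Pi.single r 1 : V → ℝ)) := by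
    ext i j
    by_cases h : i = r
    · rw [h, Matrix.updateRow_self]
      show L r j + Matrix.single r r (lam ^ 2) r j
        = L r j + (lam ^ 2 • (Pi.single r 1 : V → ℝ)) j
      congr 1
      rw [Matrix.single]
      show (if r = r ∧ r = j then lam ^ 2 else 0) = _
      rw [Pi.smul_apply, Pi.single_apply, smul_eq_mul]
      by_cases hj : j = r
      · subst hj; rw [if_pos ⟨rfl, rfl⟩, if_pos rfl, mul_one]
      · rw [if_neg (fun hh => hj hh.2.symm), if_neg hj, mul_zero]
    · rw [Matrix.updateRow_ne h]
      show L i j + Matrix.single r r (lam ^ 2) i j = L i j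
      rw [Matrix.single]
      show L i j + (if r = i ∧ r = j then lam ^ 2 else 0) = L i j
      rw [if_neg (fun hh => h hh.1.symm), add_zero]
  rw [h1, Matrix.det_updateRow_add, Matrix.det_updateRow_smul, Matrix.updateRow_eq_self]
  have hrow : ∀ e, ∑ v, incMatrix head tail e v = 0 := by
    intro e
    have h := incZ_dot hne e (fun _ => (1 : ℝ))
    rw [sub_self] at h
    rw [← h]
    refine Finset.sum_congr rfl fun v _ => ?_
    rw [incMatrix_eq_cast, mul_one]
  have hL0 : L.det = 0 := by
    by_contra hd
    have hker : L.mulVec (fun _ => (1 : ℝ)) = 0 := by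
      funext u
      rw [Matrix.mulVec, Pi.zero_apply]
      show ∑ v, L u v * 1 = 0
      have h2 : ∑ v, L u v = 0 := by
        have : ∀ v, L u v = ∑ e, ((incMatrix head tail)ᵀ
            * Matrix.diagonal (fun e => w e ^ 2)) u e * incMatrix head tail e v := by
          intro v; rw [hL, Matrix.mul_apply]
        rw [Finset.sum_congr rfl fun v _ => this v, Finset.sum_comm]
        refine Finset.sum_eq_zero fun e _ => ?_
        rw [← Finset.mul_sum, hrow e, mul_zero]
      simpa using h2
    have := Matrix.eq_zero_of_mulVec_eq_zero hd hker
    exact one_ne_zero (congrFun this r)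
  rw [hL0, zero_add]
  congr 1
  -- block decomposition
  haveI : Unique {v : V // ¬ v ≠ r} :=
    ⟨⟨⟨r, not_ne_iff.2 rfl⟩⟩, by rintro ⟨x, hx⟩; rw [not_ne_iff] at hx; exact Subtype.ext hx⟩
  rw [← Matrix.det_submatrix_equiv_self (Equiv.sumCompl (fun v : V => v ≠ r))]
  have hblocks : (Matrix.updateRow L r ((Pi.single r 1 : V → ℝ))).submatrix
        (Equiv.sumCompl (fun v : V => v ≠ r)) (Equiv.sumCompl (fun v : V => v ≠ r))
      = Matrix.fromBlocks ((Nmat head tail w r)ᵀ * Nmat head tail w r)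
          (Matrix.of fun (u : {v : V // v ≠ r}) (x : {v : V // ¬ v ≠ r}) => L u.val x.val)
          0 1 := by
    ext i j
    cases i with
    | inl u =>
      cases j with
      | inl v =>
        simp only [Matrix.submatrix_apply, Equiv.sumCompl_apply_inl,
          Matrix.fromBlocks_apply₁₁]
        rw [Matrix.updateRow_ne u.2, NtN_apply]
      | inr x =>
        simp only [Matrix.submatrix_apply, Equiv.sumCompl_apply_inl,
          Equiv.sumCompl_apply_inr, Matrix.fromBlocks_apply₁₂]
        rw [Matrix.updateRow_ne u.2]
        rfl
    | inr x =>
      have hx : x.val = r := not_ne_iff.1 x.2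
      cases j with
      | inl v =>
        simp only [Matrix.submatrix_apply, Equiv.sumCompl_apply_inl,
          Equiv.sumCompl_apply_inr, Matrix.fromBlocks_apply₂₁]
        rw [show (x : V) = r from hx, Matrix.updateRow_self, Pi.single_eq_of_ne v.2,
          Matrix.zero_apply]
      | inr y =>
        have hy : y.val = r := not_ne_iff.1 y.2
        simp only [Matrix.submatrix_apply, Equiv.sumCompl_apply_inr,
          Matrix.fromBlocks_apply₂₂]
        rw [show (x : V) = r from hx, Matrix.updateRow_self, hy, Pi.single_eq_same,
          Subsingleton.elim x y, Matrix.one_apply_eq]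
  rw [hblocks, Matrix.det_fromBlocks_zero₂₁, Matrix.det_one, mul_one]

end reduce

end MTT

/-- **Weighted matrix-tree theorem with a root.** For a finite connected simple graph
with positive edge weights, root `r` and root weight `λ > 0`,
`det(L + λ² eᵣ eᵣᵀ) = λ² · Σ_{T ∈ 𝒯(G)} Π_{e ∈ T} w(e)²`. -/
theorem matrix_tree_theorem_rooted
    {V E : Type*} [Fintype V] [DecidableEq V] [Fintype E] [DecidableEq E]
    (head tail : E → V) (w : E → ℝ)
    (hne : ∀ e, head e ≠ tail e)
    (hinj : ∀ e₁ e₂, s(head e₁, tail e₁) = s(head e₂, tail e₂) → e₁ = e₂)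
    (hw : ∀ e, 0 < w e)
    (hconn : (graphOf head tail (Set.univ : Set E)).Connected)
    (r : V) (lam : ℝ) (hlam : 0 < lam) :
    ((incMatrix head tail)ᵀ * Matrix.diagonal (fun e => w e ^ 2) * incMatrix head tail
        + Matrix.single r r (lam ^ 2)).det
      = lam ^ 2 * ∑ s ∈ Finset.univ.filter (fun s : Finset E => IsSpanningTree head tail s),
          ∏ e ∈ s, w e ^ 2 := by
  classical
  rw [MTT.reduce_det hne w r lam]
  congr 1
  rw [MTT.cauchy_expand (MTT.Nmat head tail w r)]
  rw [← Finset.sum_fiberwise Finset.univ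
    (fun f : {v : V // v ≠ r} → E => Finset.image f Finset.univ)
    (fun f => (∏ u, MTT.Nmat head tail w r (f u) u)
      * ((MTT.Nmat head tail w r).submatrix f id).det)]
  have hper : ∀ s : Finset E,
      (∑ f ∈ Finset.univ.filter
          (fun f : {v : V // v ≠ r} → E => Finset.image f Finset.univ = s),
        (∏ u, MTT.Nmat head tail w r (f u) u)
          * ((MTT.Nmat head tail w r).submatrix f id).det)
      = if IsSpanningTree head tail s then ∏ e ∈ s, w e ^ 2 else 0 := by
    intro s
    by_cases hs : IsSpanningTree head tail s
    · rw [if_pos hs]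
      exact MTT.fiber_tree hne hinj w s hs
    · rw [if_neg hs]
      exact MTT.fiber_nontree hne w s hs
  rw [Finset.sum_congr rfl fun s _ => hper s]
  exact (Finset.sum_filter _ _).symm
end
end

section
/- Let G = (V, E) be a finite tree (a connected acyclic simple graph) with |V| = n, positive edge weights w(e) > 0, incidence matrix D, W = diag(w(e)), root r ∈ V, and λ > 0. Then the rooted Gaussian Markov random field density on G factorizes with explicit normalization: π(x) = (2π)^{−n/2} λ (Π_{e ∈ E} w(e)) exp(−½ xᵀ (Dᵀ W² D + λ² e_r e_rᵀ) x) integrates to 1 over ℝ^V; equivalently det(Dᵀ W² D + λ² e_r e_rᵀ) = λ² Π_{e ∈ E} w(e)². -/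
open Matrix MeasureTheory
open scoped BigOperators Classical

noncomputable section

set_option linter.unusedSectionVars false

namespace GMRFaux


def uvec {n : ℕ} (q : Fin n → Fin (n+1)) (i : Fin n) : Fin (n+1) → ℝ :=
  Pi.single i.succ 1 - Pi.single (q i) 1

def qmat (n : ℕ) (q : Fin n → Fin (n+1)) (a : Fin n → ℝ) (lam : ℝ) :
    Matrix (Fin (n+1)) (Fin (n+1)) ℝ :=
  (∑ i, a i • vecMulVec (uvec q i) (uvec q i)) + Matrix.single 0 0 lam

lemma uvec_apply {n : ℕ} (q : Fin n → Fin (n+1)) (i : Fin n) (x : Fin (n+1)) :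
    uvec q i x = (if x = i.succ then 1 else 0) - (if x = q i then 1 else 0) := by
  simp [uvec, Pi.single_apply]

lemma qmat_apply (n : ℕ) (q : Fin n → Fin (n+1)) (a : Fin n → ℝ) (lam : ℝ)
    (x y : Fin (n+1)) :
    qmat n q a lam x y = (∑ i, a i * (uvec q i x * uvec q i y))
      + (if x = 0 ∧ y = 0 then lam else 0) := by
  simp [qmat, Matrix.sum_apply, vecMulVec_apply, Matrix.single, mul_assoc,
    and_comm, eq_comm]

lemma qmat_det (n : ℕ) : ∀ (q : Fin n → Fin (n+1)) (a : Fin n → ℝ) (lam : ℝ),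
    (∀ i, (q i : ℕ) ≤ i) → (∀ i, a i ≠ 0) →
    (qmat n q a lam).det = lam * ∏ i, a i := by
  induction n with
  | zero =>
      intro q a lam _ _
      rw [Matrix.det_fin_one, qmat_apply]
      simp
  | succ n ih =>
      intro q a lam hq ha
      set c := a (Fin.last n) with hc
      have hqlast : (q (Fin.last n) : ℕ) < n + 1 := Nat.lt_succ_of_le (hq _)
      set p : Fin (n+1) := ⟨q (Fin.last n), hqlast⟩ with hpdef
      have hp : q (Fin.last n) = p.castSucc := by
        apply Fin.ext; simp [hpdef]
      have hq0 : ∀ i : Fin n, (q i.castSucc : ℕ) < n + 1 := by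
        intro i
        have h := hq i.castSucc
        have h2 := i.isLt
        simp only [Fin.coe_castSucc] at h
        omega
      set q0 : Fin n → Fin (n+1) := fun i => ⟨q i.castSucc, hq0 i⟩ with hq0def
      have hcast : ∀ i : Fin n, q i.castSucc = (q0 i).castSucc := by
        intro i; apply Fin.ext; simp [hq0def]
      set a0 : Fin n → ℝ := fun i => a i.castSucc with ha0
      set sp : Fin (n+1) → ℝ := Pi.single p 1 with hsp
      -- evaluation helpers
      have h1 : ∀ (i : Fin n) (x : Fin (n+1)),
          uvec q i.castSucc x.castSucc = uvec q0 i x := by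
        intro i x
        rw [uvec_apply, uvec_apply, Fin.succ_castSucc, hcast]
        simp only [Fin.castSucc_inj]
      have h2 : ∀ i : Fin n, uvec q i.castSucc (Fin.last (n+1)) = 0 := by
        intro i
        rw [uvec_apply, Fin.succ_castSucc, hcast]
        rw [if_neg (by exact (Fin.castSucc_lt_last _).ne' ),
          if_neg (by exact (Fin.castSucc_lt_last _).ne')]
        ring
      have h3 : ∀ x : Fin (n+1), uvec q (Fin.last n) x.castSucc = -(sp x) := by
        intro x
        rw [uvec_apply, Fin.succ_last, hp]
        rw [if_neg (by exact (Fin.castSucc_lt_last _).ne)]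
        simp only [Fin.castSucc_inj, hsp, Pi.single_apply, zero_sub]
      have h4 : uvec q (Fin.last n) (Fin.last (n+1)) = 1 := by
        rw [uvec_apply, Fin.succ_last, hp]
        rw [if_pos rfl, if_neg (by exact (Fin.castSucc_lt_last _).ne')]
        ring
      -- blocks
      set A : Matrix (Fin (n+1)) (Fin (n+1)) ℝ :=
        qmat n q0 a0 lam + c • vecMulVec sp sp with hA
      set B : Matrix (Fin (n+1)) (Fin 1) ℝ :=
        Matrix.of (fun x _ => -(c * sp x)) with hB
      set C : Matrix (Fin 1) (Fin (n+1)) ℝ :=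
        Matrix.of (fun _ y => -(c * sp y)) with hCc
      set D : Matrix (Fin 1) (Fin 1) ℝ := c • 1 with hD
      have key : (qmat (n+1) q a lam).submatrix finSumFinEquiv finSumFinEquiv
          = fromBlocks A B C D := by
        ext x y
        have fl : (finSumFinEquiv (Sum.inr 0 : Fin (n+1) ⊕ Fin 1)) = Fin.last (n+1) := by
          apply Fin.ext; simp
        have fc : ∀ z : Fin (n+1),
            (finSumFinEquiv (Sum.inl z : Fin (n+1) ⊕ Fin 1)) = z.castSucc := by
          intro z; apply Fin.ext; simp
        cases x with
        | inl x =>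
          cases y with
          | inl y =>
            simp only [Matrix.submatrix_apply, fc, fromBlocks_apply₁₁]
            rw [qmat_apply, Fin.sum_univ_castSucc]
            simp only [h1, h3]
            rw [hA]
            simp only [Matrix.add_apply, Matrix.smul_apply, vecMulVec_apply, qmat_apply]
            have h0 : ∀ z : Fin (n+1), (z.castSucc = (0 : Fin (n+2))) ↔ z = 0 := by
              intro z
              rw [show (0 : Fin (n+2)) = Fin.castSucc 0 by simp, Fin.castSucc_inj]
            simp only [h0]
            have haa : ∀ i : Fin n, a0 i = a i.castSucc := fun _ => rfl
            simp only [haa, smul_eq_mul, neg_mul_neg]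
            ring
          | inr y =>
            have hy : y = 0 := Subsingleton.elim _ _
            subst hy
            simp only [Matrix.submatrix_apply, fc, fl, fromBlocks_apply₁₂]
            rw [qmat_apply, Fin.sum_univ_castSucc]
            simp only [h1, h2, h3, h4]
            rw [hB]
            have : ¬((x.castSucc = (0:Fin (n+2))) ∧ (Fin.last (n+1) = (0:Fin (n+2)))) := by
              rintro ⟨-, h⟩
              exact absurd h (by simp [Fin.ext_iff])
            rw [if_neg this]
            simp [hc]
        | inr x =>
          have hx : x = 0 := Subsingleton.elim _ _
          subst hx
          cases y with
          | inl y =>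
            simp only [Matrix.submatrix_apply, fc, fl, fromBlocks_apply₂₁]
            rw [qmat_apply, Fin.sum_univ_castSucc]
            simp only [h1, h2, h3, h4]
            rw [hCc]
            have : ¬((Fin.last (n+1) = (0:Fin (n+2))) ∧ (y.castSucc = (0:Fin (n+2)))) := by
              rintro ⟨h, -⟩
              exact absurd h (by simp [Fin.ext_iff])
            rw [if_neg this]
            simp [hc]
          | inr y =>
            have hy : y = 0 := Subsingleton.elim _ _
            subst hy
            simp only [Matrix.submatrix_apply, fl, fromBlocks_apply₂₂]
            rw [qmat_apply, Fin.sum_univ_castSucc]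
            simp only [h2, h4]
            have : ¬((Fin.last (n+1) = (0:Fin (n+2))) ∧ (Fin.last (n+1) = (0:Fin (n+2)))) := by
              rintro ⟨h, -⟩
              exact absurd h (by simp [Fin.ext_iff])
            rw [if_neg this]
            simp [hD, hc]
      have hcne : c ≠ 0 := ha _
      letI : Invertible D := by
        rw [hD]
        exact invertibleOfRightInverse _ (c⁻¹ • 1) (by
          rw [Matrix.smul_mul, Matrix.mul_smul, one_mul, smul_smul,
            mul_inv_cancel₀ hcne, one_smul])
      have hBDC : B * ⅟D * C = c • vecMulVec sp sp := by
        have hinv : ⅟D = c⁻¹ • 1 := by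
          apply invOf_eq_right_inv
          rw [hD, Matrix.smul_mul, Matrix.mul_smul, one_mul, smul_smul,
            mul_inv_cancel₀ hcne, one_smul]
        rw [hinv]
        ext x y
        rw [Matrix.mul_apply]
        simp only [Matrix.mul_apply, Fin.sum_univ_one, Matrix.smul_apply, Matrix.one_apply,
          hB, hCc, Matrix.of_apply, vecMulVec_apply, smul_eq_mul]
        simp
        field_simp
      have hsub : A - B * ⅟D * C = qmat n q0 a0 lam := by
        rw [hBDC, hA]; abel
      have hdet : (qmat (n+1) q a lam).det = det D * det (A - B * ⅟D * C) := by
        rw [← Matrix.det_submatrix_equiv_self finSumFinEquiv, key, Matrix.det_fromBlocks₂₂]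
      rw [hdet, hsub, ih q0 a0 lam (fun i => by simpa [hq0def] using hq i.castSucc) 
        (fun i => ha _)]
      have hdd : det D = c := by
        rw [hD, Matrix.det_fin_one]
        simp
      rw [hdd, Fin.prod_univ_castSucc]
      ring



variable {V E : Type*} [Fintype V] [DecidableEq V] [Fintype E] [DecidableEq E]

lemma adj_graphOf (head tail : E → V) {v u : V} :
    (graphOf head tail (Set.univ : Set E)).Adj v u ↔
      v ≠ u ∧ ∃ e, (head e = v ∧ tail e = u) ∨ (head e = u ∧ tail e = v) := by
  constructor
  · rintro ⟨hne, h | h⟩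
    · obtain ⟨e, -, he⟩ := h
      exact ⟨hne, e, Or.inl he⟩
    · obtain ⟨e, -, he⟩ := h
      exact ⟨hne, e, Or.inr he⟩
  · rintro ⟨hne, e, he | he⟩
    · exact ⟨hne, Or.inl ⟨e, trivial, he⟩⟩
    · exact ⟨hne, Or.inr ⟨e, trivial, he⟩⟩

lemma card_V (head tail : E → V)
    (hne : ∀ e, head e ≠ tail e)
    (hinj : ∀ e₁ e₂, s(head e₁, tail e₁) = s(head e₂, tail e₂) → e₁ = e₂)
    (hconn : (graphOf head tail (Set.univ : Set E)).Connected)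
    (hacyc : (graphOf head tail (Set.univ : Set E)).IsAcyclic) :
    Fintype.card V = Fintype.card E + 1 := by
  set G := graphOf head tail (Set.univ : Set E) with hG
  have hT : G.IsTree := ⟨hconn, hacyc⟩
  have hmem : ∀ e : E, s(head e, tail e) ∈ G.edgeSet := by
    intro e
    rw [SimpleGraph.mem_edgeSet, hG, adj_graphOf]
    exact ⟨hne e, e, Or.inl ⟨rfl, rfl⟩⟩
  have hbij : Function.Bijective (fun e : E => (⟨s(head e, tail e), hmem e⟩ : G.edgeSet)) := by
    constructor
    · intro e₁ e₂ h
      exact hinj e₁ e₂ (congrArg Subtype.val h)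
    · rintro ⟨q, hq⟩
      induction q with
      | _ a b =>
        rw [SimpleGraph.mem_edgeSet, hG, adj_graphOf] at hq
        obtain ⟨-, e, he | he⟩ := hq
        · exact ⟨e, by simp [he.1, he.2]⟩
        · exact ⟨e, by simp [he.1, he.2, Sym2.eq_swap]⟩
  have hcard : Fintype.card E = Fintype.card G.edgeSet := Fintype.card_of_bijective hbij
  have := hT.card_edgeFinset
  rw [SimpleGraph.edgeFinset_card] at this
  omega

lemma exists_ordering (head tail : E → V)
    (hne : ∀ e, head e ≠ tail e)
    (hinj : ∀ e₁ e₂, s(head e₁, tail e₁) = s(head e₂, tail e₂) → e₁ = e₂)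
    (hconn : (graphOf head tail (Set.univ : Set E)).Connected)
    (hacyc : (graphOf head tail (Set.univ : Set E)).IsAcyclic)
    (r : V) :
    ∃ (σ : Fin (Fintype.card E + 1) ≃ V) (τ : Fin (Fintype.card E) ≃ E)
      (q : Fin (Fintype.card E) → Fin (Fintype.card E + 1)),
      σ 0 = r ∧ (∀ i, ((q i : ℕ) ≤ (i : ℕ))) ∧
      ∀ i, (head (τ i) = σ i.succ ∧ tail (τ i) = σ (q i)) ∨
           (head (τ i) = σ (q i) ∧ tail (τ i) = σ i.succ) := by
  have hcardV := card_V head tail hne hinj hconn hacyc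
  have claim : ∀ k, k ≤ Fintype.card E →
      ∃ (σ : Fin (k+1) → V) (τ : Fin k → E) (q : Fin k → Fin (k+1)),
        Function.Injective σ ∧ σ 0 = r ∧ (∀ i, ((q i : ℕ) ≤ (i : ℕ))) ∧
        ∀ i, (head (τ i) = σ i.succ ∧ tail (τ i) = σ (q i)) ∨
             (head (τ i) = σ (q i) ∧ tail (τ i) = σ i.succ) := by
    intro k
    induction k with
    | zero =>
        intro _
        exact ⟨fun _ => r, Fin.elim0, Fin.elim0,
          fun x y _ => by apply Fin.ext; omega, rfl,
          fun i => i.elim0, fun i => i.elim0⟩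
    | succ k ih =>
        intro hk
        obtain ⟨σ, τ, q, hσinj, hσ0, hq, hend⟩ := ih (Nat.le_of_succ_le hk)
        have hnotsurj : ∃ v : V, v ∉ Set.range σ := by
          by_contra h
          push_neg at h
          have hsurj : Function.Surjective σ := fun v => h v
          have := Fintype.card_le_of_surjective σ hsurj
          simp only [Fintype.card_fin] at this
          omega
        obtain ⟨v, hv⟩ := hnotsurj
        obtain ⟨p⟩ := hconn.preconnected r v
        obtain ⟨d, -, hd1, hd2⟩ := p.exists_boundary_dart (Set.range σ) ⟨0, hσ0⟩ hv
        have hadj := d.adj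
        rw [adj_graphOf] at hadj
        obtain ⟨-, e, he⟩ := hadj
        obtain ⟨j, hj⟩ := hd1
        refine ⟨Fin.snoc σ d.snd, Fin.snoc τ e,
          Fin.snoc (fun i => (q i).castSucc) j.castSucc, ?_, ?_, ?_, ?_⟩
        · intro x y hxy
          induction x using Fin.lastCases with
          | last =>
            induction y using Fin.lastCases with
            | last => rfl
            | cast y =>
              rw [Fin.snoc_last, Fin.snoc_castSucc] at hxy
              exact absurd ⟨y, hxy.symm⟩ hd2
          | cast x =>
            induction y using Fin.lastCases with
            | last =>
              rw [Fin.snoc_last, Fin.snoc_castSucc] at hxy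
              exact absurd ⟨x, hxy⟩ hd2
            | cast y =>
              rw [Fin.snoc_castSucc, Fin.snoc_castSucc] at hxy
              exact congrArg Fin.castSucc (hσinj hxy)
        · rw [show (0 : Fin (k+2)) = Fin.castSucc 0 by simp, Fin.snoc_castSucc]
          exact hσ0
        · intro i
          induction i using Fin.lastCases with
          | last =>
            rw [Fin.snoc_last]
            have := j.isLt
            simp only [Fin.coe_castSucc, Fin.val_last]
            omega
          | cast i => rw [Fin.snoc_castSucc]; simpa using hq i
        · intro i
          induction i using Fin.lastCases with
          | last =>
            rw [Fin.snoc_last, Fin.snoc_last, Fin.succ_last, Fin.snoc_last,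
              Fin.snoc_castSucc, hj]
            rcases he with he | he
            · exact Or.inr ⟨he.1, he.2⟩
            · exact Or.inl ⟨he.1, he.2⟩
          | cast i =>
            rw [Fin.snoc_castSucc, Fin.snoc_castSucc, Fin.succ_castSucc,
              Fin.snoc_castSucc, Fin.snoc_castSucc]
            exact hend i
  obtain ⟨σ, τ, q, hσinj, hσ0, hq, hend⟩ := claim (Fintype.card E) le_rfl
  have hσbij : Function.Bijective σ := by
    rw [Fintype.bijective_iff_injective_and_card]
    exact ⟨hσinj, by simp [hcardV]⟩
  have hτinj : Function.Injective τ := by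
    intro i j hij
    rcases hend i with hi | hi <;> rcases hend j with hj | hj <;>
      rw [hij] at hi
    · exact Fin.succ_injective _ (hσinj (hi.1.symm.trans hj.1))
    · exfalso
      have h1 : i.succ = q j := hσinj (hi.1.symm.trans hj.1)
      have h2 : q i = j.succ := hσinj (hi.2.symm.trans hj.2)
      have := hq i
      have := hq j
      have e1 : (i.succ : ℕ) = (q j : ℕ) := congrArg Fin.val h1
      have e2 : (q i : ℕ) = (j.succ : ℕ) := congrArg Fin.val h2
      simp [Fin.val_succ] at e1 e2
      omega
    · exfalso
      have h1 : q i = j.succ := hσinj (hi.1.symm.trans hj.1)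
      have h2 : i.succ = q j := hσinj (hi.2.symm.trans hj.2)
      have := hq i
      have := hq j
      have e1 : (q i : ℕ) = (j.succ : ℕ) := congrArg Fin.val h1
      have e2 : (i.succ : ℕ) = (q j : ℕ) := congrArg Fin.val h2
      simp [Fin.val_succ] at e1 e2
      omega
    · exact Fin.succ_injective _ (hσinj (hi.2.symm.trans hj.2))
  have hτbij : Function.Bijective τ := by
    rw [Fintype.bijective_iff_injective_and_card]
    exact ⟨hτinj, by simp⟩
  exact ⟨Equiv.ofBijective σ hσbij, Equiv.ofBijective τ hτbij, q, hσ0, hq, hend⟩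



variable {V E : Type*} [Fintype V] [DecidableEq V] [Fintype E] [DecidableEq E]

lemma incMatrix_apply (head tail : E → V) (hne : ∀ e, head e ≠ tail e) (e : E) (v : V) :
    incMatrix head tail e v
      = (if v = head e then 1 else 0) - (if v = tail e then 1 else 0) := by
  by_cases h1 : v = head e
  · have h2 : ¬ v = tail e := fun h => hne e (h1 ▸ h ▸ rfl)
    simp [incMatrix, h1, h2, hne e, Ne.symm (hne e)]
  · by_cases h2 : v = tail e <;> simp [incMatrix, h1, h2, hne e, Ne.symm (hne e)]

lemma bigM_apply (head tail : E → V) (w : E → ℝ) (r : V) (lam : ℝ) (u v : V) :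
    ((incMatrix head tail)ᵀ * Matrix.diagonal (fun e => w e ^ 2) * incMatrix head tail
        + Matrix.single r r (lam ^ 2)) u v
      = (∑ e, w e ^ 2 * (incMatrix head tail e u * incMatrix head tail e v))
        + (if u = r ∧ v = r then lam ^ 2 else 0) := by
  simp only [Matrix.add_apply, Matrix.mul_apply, Matrix.transpose_apply,
    Matrix.diagonal_apply, Matrix.single, Matrix.of_apply]
  congr 1
  · apply Finset.sum_congr rfl
    intro e _
    rw [Finset.sum_eq_single e (fun b _ hb => by simp [hb]) (fun h => absurd (Finset.mem_univ e) h)]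
    simp only [eq_self_iff_true, if_true]
    ring
  · simp [and_comm, eq_comm]

lemma bigM_eq_submatrix (head tail : E → V) (w : E → ℝ) (r : V) (lam : ℝ)
    (hne : ∀ e, head e ≠ tail e)
    (σ : Fin (Fintype.card E + 1) ≃ V) (τ : Fin (Fintype.card E) ≃ E)
    (q : Fin (Fintype.card E) → Fin (Fintype.card E + 1))
    (hσ0 : σ 0 = r)
    (hend : ∀ i, (head (τ i) = σ i.succ ∧ tail (τ i) = σ (q i)) ∨
           (head (τ i) = σ (q i) ∧ tail (τ i) = σ i.succ)) :
    ((incMatrix head tail)ᵀ * Matrix.diagonal (fun e => w e ^ 2) * incMatrix head tail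
        + Matrix.single r r (lam ^ 2))
      = (qmat (Fintype.card E) q (fun i => w (τ i) ^ 2) (lam ^ 2)).submatrix σ.symm σ.symm := by
  ext u v
  rw [Matrix.submatrix_apply, bigM_apply, qmat_apply]
  congr 1
  · rw [← Equiv.sum_comp τ (fun e => w e ^ 2 * (incMatrix head tail e u * incMatrix head tail e v))]
    apply Finset.sum_congr rfl
    intro i _
    rcases hend i with h | h
    · have key : ∀ z : V, incMatrix head tail (τ i) z = uvec q i (σ.symm z) := by
        intro z
        rw [incMatrix_apply head tail hne, uvec_apply, h.1, h.2]
        simp only [Equiv.symm_apply_eq]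
      rw [key u, key v]
    · have key : ∀ z : V, incMatrix head tail (τ i) z = -uvec q i (σ.symm z) := by
        intro z
        rw [incMatrix_apply head tail hne, uvec_apply, h.1, h.2]
        simp only [Equiv.symm_apply_eq]
        ring
      rw [key u, key v]
      ring
  · have h0 : ∀ z : V, (σ.symm z = 0) ↔ (z = r) := by
      intro z
      rw [Equiv.symm_apply_eq, hσ0]
    simp [h0]



variable {ι : Type*} [Fintype ι] [DecidableEq ι]

lemma posSemidef_det_nonneg {M : Matrix ι ι ℝ} (hM : M.PosSemidef) : 0 ≤ M.det := by
  rw [hM.1.det_eq_prod_eigenvalues]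
  apply Finset.prod_nonneg
  intro i _
  exact_mod_cast hM.eigenvalues_nonneg i

open scoped MatrixOrder in
lemma integral_gaussian_matrix {M : Matrix ι ι ℝ} (hM : M.PosSemidef) {c : ℝ}
    (hc : 0 < c) (hdet : M.det = c ^ 2) :
    ∫ x : ι → ℝ, Real.exp (-(1/2) * (x ⬝ᵥ M.mulVec x))
      = Real.sqrt (2 * Real.pi) ^ (Fintype.card ι) / c := by
  set S := CFC.sqrt M with hSdef
  have hS2 : S * S = M := CFC.sqrt_mul_sqrt_self M hM.nonneg
  have hSsd : S.PosSemidef := (CFC.sqrt_nonneg M).posSemidef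
  have hSsymm : Sᵀ = S := by
    have := hSsd.1
    rw [Matrix.IsHermitian] at this
    calc Sᵀ = Sᴴ := by ext i j; simp [Matrix.conjTranspose_apply]
    _ = S := this
  have hdetS : S.det = c := by
    have h1 : S.det * S.det = c ^ 2 := by
      rw [← Matrix.det_mul, hS2, hdet]
    have h2 : 0 ≤ S.det := posSemidef_det_nonneg hSsd
    nlinarith
  have hdetSne : S.det ≠ 0 := by rw [hdetS]; exact hc.ne'
  -- quadratic form
  have hquad : ∀ x : ι → ℝ, x ⬝ᵥ M.mulVec x = (S.mulVec x) ⬝ᵥ (S.mulVec x) := by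
    intro x
    conv_lhs => rw [← hS2]
    rw [← Matrix.mulVec_mulVec, Matrix.dotProduct_mulVec, ← Matrix.mulVec_transpose, hSsymm]
  -- the measurable equiv given by S
  letI : Invertible S := Matrix.invertibleOfIsUnitDet S (isUnit_iff_ne_zero.mpr hdetSne)
  set eL : (ι → ℝ) ≃ₗ[ℝ] (ι → ℝ) := S.toLinearEquiv' ‹Invertible S›
  set eC : (ι → ℝ) ≃L[ℝ] (ι → ℝ) := eL.toContinuousLinearEquiv
  set eM : (ι → ℝ) ≃ᵐ (ι → ℝ) := eC.toHomeomorph.toMeasurableEquiv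
  have heM : ∀ x, eM x = S.mulVec x := by
    intro x
    rfl
  have hmap : Measure.map (⇑eM) volume
      = ENNReal.ofReal |S.det⁻¹| • volume := by
    have hfun : ⇑eM = ⇑(Matrix.toLin' S) := by
      funext x
      rw [heM, Matrix.toLin'_apply]
    rw [hfun]
    rw [Real.map_linearMap_volume_pi_eq_smul_volume_pi]
    · rw [LinearMap.det_toLin' S]
    · rw [LinearMap.det_toLin' S]; exact hdetSne
  have step1 : ∫ x : ι → ℝ, Real.exp (-(1/2) * (x ⬝ᵥ M.mulVec x))
      = |S.det⁻¹| * ∫ y : ι → ℝ, Real.exp (-(1/2) * (y ⬝ᵥ y)) := by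
    calc ∫ x : ι → ℝ, Real.exp (-(1/2) * (x ⬝ᵥ M.mulVec x))
        = ∫ x : ι → ℝ, Real.exp (-(1/2) * ((eM x) ⬝ᵥ (eM x))) := by
          congr 1; funext x; rw [hquad, heM]
      _ = ∫ y : ι → ℝ, Real.exp (-(1/2) * (y ⬝ᵥ y)) ∂(Measure.map (⇑eM) volume) := by
          rw [MeasureTheory.integral_map_equiv]
      _ = |S.det⁻¹| * ∫ y : ι → ℝ, Real.exp (-(1/2) * (y ⬝ᵥ y)) := by
          rw [hmap, MeasureTheory.integral_smul_measure, ENNReal.toReal_ofReal (abs_nonneg _),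
            smul_eq_mul]
  have step2 : ∫ y : ι → ℝ, Real.exp (-(1/2) * (y ⬝ᵥ y))
      = Real.sqrt (2 * Real.pi) ^ (Fintype.card ι) := by
    have hsplit : ∀ y : ι → ℝ, Real.exp (-(1/2) * (y ⬝ᵥ y))
        = ∏ i, Real.exp (-(1/2) * (y i ^ 2)) := by
      intro y
      rw [← Real.exp_sum]
      congr 1
      rw [dotProduct, Finset.mul_sum]
      apply Finset.sum_congr rfl
      intro i _
      ring
    simp_rw [hsplit]
    rw [MeasureTheory.integral_fintype_prod_volume_eq_pow (ι := ι) (fun t : ℝ => Real.exp (-(1/2) * t ^ 2))]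
    congr 1
    have : ∀ t : ℝ, -(1/2) * t ^ 2 = -(1/2 : ℝ) * t ^ 2 := fun t => rfl
    rw [show (fun t : ℝ => Real.exp (-(1/2) * t ^ 2)) = fun t : ℝ => Real.exp (-(1/2 : ℝ) * t ^ 2) from rfl]
    rw [integral_gaussian (1/2 : ℝ)]
    rw [show Real.pi / (1/2) = 2 * Real.pi by ring]
  rw [step1, step2, hdetS, abs_of_pos (by positivity)]
  field_simp



variable {V E : Type*} [Fintype V] [DecidableEq V] [Fintype E] [DecidableEq E]

lemma posSemidef_bigM (head tail : E → V) (w : E → ℝ) (r : V) (lam : ℝ) :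
    ((incMatrix head tail)ᵀ * Matrix.diagonal (fun e => w e ^ 2) * incMatrix head tail
        + Matrix.single r r (lam ^ 2)).PosSemidef := by
  set Amat : Matrix (E ⊕ Unit) V ℝ := Matrix.of (fun s v =>
    Sum.elim (fun e => w e * incMatrix head tail e v) (fun _ => if v = r then lam else 0) s)
    with hAmat
  have key : ((incMatrix head tail)ᵀ * Matrix.diagonal (fun e => w e ^ 2) * incMatrix head tail
      + Matrix.single r r (lam ^ 2)) = Amatᴴ * Amat := by
    ext u v
    rw [Matrix.mul_apply]
    rw [Fintype.sum_sum_type]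
    simp only [Matrix.conjTranspose_apply, hAmat, Matrix.of_apply, Sum.elim_inl, Sum.elim_inr,
      star_trivial]
    simp only [Matrix.add_apply, Matrix.mul_apply, Matrix.transpose_apply,
      Matrix.diagonal_apply, Matrix.single, Matrix.of_apply, Finset.univ_unique,
      Finset.sum_const, Finset.card_singleton, one_smul]
    congr 1
    · apply Finset.sum_congr rfl
      intro e _
      rw [Finset.sum_eq_single e (fun b _ hb => by simp [hb]) (fun h => absurd (Finset.mem_univ e) h)]
      simp only [eq_self_iff_true, if_true]
      ring
    · by_cases hu : u = r <;> by_cases hv : v = r <;>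
        simp [hu, hv, sq, Ne.symm, eq_comm]
  rw [key]
  exact Matrix.posSemidef_conjTranspose_mul_self Amat


end GMRFaux

/-- **Rooted GMRF density on a tree.** If the graph is itself a tree (connected and
acyclic), the rooted GMRF density factorizes with explicit normalization:
`π(x) = (2π)^{−n/2} λ (Π_e w(e)) exp(−½ xᵀ(DᵀW²D + λ²eᵣeᵣᵀ)x)` integrates to `1`;
equivalently `det(DᵀW²D + λ²eᵣeᵣᵀ) = λ² Π_e w(e)²`. -/
theorem rooted_GMRF_tree_normalization
    {V E : Type*} [Fintype V] [DecidableEq V] [Fintype E] [DecidableEq E]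
    (head tail : E → V) (w : E → ℝ)
    (hne : ∀ e, head e ≠ tail e)
    (hinj : ∀ e₁ e₂, s(head e₁, tail e₁) = s(head e₂, tail e₂) → e₁ = e₂)
    (hw : ∀ e, 0 < w e)
    (hconn : (graphOf head tail (Set.univ : Set E)).Connected)
    (hacyc : (graphOf head tail (Set.univ : Set E)).IsAcyclic)
    (r : V) (lam : ℝ) (hlam : 0 < lam) :
    (∫ x : V → ℝ,
        (2 * Real.pi) ^ (-(Fintype.card V : ℝ) / 2) * lam * (∏ e, w e) *
          Real.exp (-(1/2) * (x ⬝ᵥ ((incMatrix head tail)ᵀ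
            * Matrix.diagonal (fun e => w e ^ 2) * incMatrix head tail
            + Matrix.single r r (lam ^ 2)).mulVec x))) = 1
    ∧ ((incMatrix head tail)ᵀ * Matrix.diagonal (fun e => w e ^ 2) * incMatrix head tail
        + Matrix.single r r (lam ^ 2)).det = lam ^ 2 * ∏ e, w e ^ 2 := by
  obtain ⟨σ, τ, q, hσ0, hq, hend⟩ :=
    GMRFaux.exists_ordering head tail hne hinj hconn hacyc r
  have hdet : ((incMatrix head tail)ᵀ * Matrix.diagonal (fun e => w e ^ 2) * incMatrix head tail
      + Matrix.single r r (lam ^ 2)).det = lam ^ 2 * ∏ e, w e ^ 2 := by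
    rw [GMRFaux.bigM_eq_submatrix head tail w r lam hne σ τ q hσ0 hend,
      Matrix.det_submatrix_equiv_self,
      GMRFaux.qmat_det _ q _ _ hq (fun i => (pow_ne_zero 2 (hw (τ i)).ne'))]
    congr 1
    exact Equiv.prod_comp τ (fun e => w e ^ 2)
  refine ⟨?_, hdet⟩
  have hM := GMRFaux.posSemidef_bigM head tail w r lam
  have hprodpos : (0:ℝ) < ∏ e, w e := Finset.prod_pos (fun e _ => hw e)
  have hcpos : 0 < lam * ∏ e, w e := mul_pos hlam hprodpos
  have hdet2 : ((incMatrix head tail)ᵀ * Matrix.diagonal (fun e => w e ^ 2) * incMatrix head tail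
      + Matrix.single r r (lam ^ 2)).det = (lam * ∏ e, w e) ^ 2 := by
    rw [hdet, mul_pow, ← Finset.prod_pow]
  have hint := GMRFaux.integral_gaussian_matrix hM hcpos hdet2
  rw [MeasureTheory.integral_const_mul, hint]
  have h2π : (0:ℝ) < 2 * Real.pi := by positivity
  have hs : Real.sqrt (2 * Real.pi) ^ (Fintype.card V)
      = (2 * Real.pi) ^ ((Fintype.card V : ℝ) / 2) := by
    rw [Real.sqrt_eq_rpow, ← Real.rpow_natCast ((2 * Real.pi) ^ ((1:ℝ)/2)) _,
      ← Real.rpow_mul h2π.le]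
    congr 1
    ring
  have hkey : (2 * Real.pi) ^ (-(Fintype.card V : ℝ) / 2)
      * Real.sqrt (2 * Real.pi) ^ (Fintype.card V) = 1 := by
    rw [hs, ← Real.rpow_add h2π]
    rw [show -(Fintype.card V : ℝ) / 2 + (Fintype.card V : ℝ) / 2 = 0 by ring,
      Real.rpow_zero]
  have hrw : (2 * Real.pi) ^ (-(Fintype.card V : ℝ) / 2) * lam * (∏ e, w e) *
      (Real.sqrt (2 * Real.pi) ^ (Fintype.card V) / (lam * ∏ e, w e))
      = ((2 * Real.pi) ^ (-(Fintype.card V : ℝ) / 2)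
        * Real.sqrt (2 * Real.pi) ^ (Fintype.card V))
        * ((lam * ∏ e, w e) / (lam * ∏ e, w e)) := by
    ring
  rw [hrw, hkey, div_self hcpos.ne', mul_one]
end
end

section
/- Let G = (V, E) be a finite connected simple graph with positive edge weights w(e) > 0, let λ > 0, let r ∈ V, and let φ : ℝ → (0, ∞) be a strictly positive probability density. Consider the hierarchical prior where the spanning tree T is drawn with probability ℙ(T = T̃) = (Π_{e∈T̃} w(e)) / (Σ_{T'∈𝒯(G)} Π_{e∈T'} w(e)) and, given T, x ∈ ℝ^V has density π(x | T) = λ(Π_{e∈T} w'(e)) φ(λ x_r) Π_{{v₁,v₂}∈T} φ(λ(x_{v₁} − x_{v₂})) where normalization is over the rooted tree. Then for every fixed x ∈ ℝ^V, the conditional distribution of T given x is again a weighted random spanning tree with updated edge weights w̃({v₁,v₂}) = w({v₁,v₂}) · φ(λ(x_{v₁} − x_{v₂})); that is, for every spanning tree T̃ of G, ℙ(T = T̃ | x) = (Π_{{v₁,v₂}∈T̃} w̃({v₁,v₂})) / (Σ_{T'∈𝒯(G)} Π_{{v₁,v₂}∈T'} w̃({v₁,v₂})). -/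
open Matrix MeasureTheory
open scoped BigOperators Classical

noncomputable section

lemma span_card {V E : Type*} [Fintype V] [DecidableEq V] [Fintype E] [DecidableEq E]
    (head tail : E → V) (hne : ∀ e, head e ≠ tail e)
    (hinj : ∀ e₁ e₂, s(head e₁, tail e₁) = s(head e₂, tail e₂) → e₁ = e₂)
    {s : Finset E} (h : IsSpanningTree head tail s) :
    s.card + 1 = Fintype.card V := by
  classical
  have ht : (graphOf head tail (↑s : Set E)).IsTree := ⟨h.1, h.2⟩
  rw [← ht.card_edgeFinset]
  congr 1
  refine Finset.card_bij (fun e _ => s(head e, tail e)) ?_ ?_ ?_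
  · intro e he
    rw [SimpleGraph.mem_edgeFinset, SimpleGraph.mem_edgeSet]
    exact ⟨hne e, Or.inl ⟨e, he, rfl, rfl⟩⟩
  · intro e₁ h₁ e₂ h₂ hh
    exact hinj e₁ e₂ hh
  · intro b hb
    induction b using Sym2.ind with
    | _ a b =>
      rw [SimpleGraph.mem_edgeFinset, SimpleGraph.mem_edgeSet] at hb
      obtain ⟨hab, h | h⟩ := hb
      · obtain ⟨e, he, h1, h2⟩ := h
        exact ⟨e, Finset.mem_coe.mp he, by simp [h1, h2]⟩
      · obtain ⟨e, he, h1, h2⟩ := h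
        exact ⟨e, Finset.mem_coe.mp he, by simp [h1, h2, Sym2.eq_swap]⟩

/-- **Random spanning tree hyperprior conjugacy.** In the hierarchical RST-MRF model,
where a spanning tree `T̃` has prior probability proportional to `Π_{e∈T̃} w(e)` and,
given the tree, `x` has the rooted-tree MRF density
`π(x|T̃) = λ (Π_{e∈T̃} λ) φ(λ xᵣ) Π_{e∈T̃} φ(λ(x_{head e} − x_{tail e}))`,
the conditional distribution of the tree given `x` (defined by Bayes's rule) is again
a weighted random spanning tree with conjugated weights
`w̃(e) = w(e) φ(λ(x_{head e} − x_{tail e}))`. -/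
theorem RST_MRF_conjugacy
    {V E : Type*} [Fintype V] [DecidableEq V] [Fintype E] [DecidableEq E]
    (head tail : E → V) (w : E → ℝ)
    (hne : ∀ e, head e ≠ tail e)
    (hinj : ∀ e₁ e₂, s(head e₁, tail e₁) = s(head e₂, tail e₂) → e₁ = e₂)
    (hw : ∀ e, 0 < w e)
    (hconn : (graphOf head tail (Set.univ : Set E)).Connected)
    (r : V) (lam : ℝ) (hlam : 0 < lam)
    (φ : ℝ → ℝ) (hφpos : ∀ z, 0 < φ z) (hφmeas : Measurable φ)
    (hφint : ∫ z : ℝ, φ z = 1)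
    (x : V → ℝ) :
    ∀ T ∈ Finset.univ.filter (fun s : Finset E => IsSpanningTree head tail s),
      -- posterior of the tree by Bayes's rule: ℙ(T) π(x|T) normalized over 𝒯(G)
      (((∏ e ∈ T, w e) /
          (∑ T' ∈ Finset.univ.filter (fun s : Finset E => IsSpanningTree head tail s),
            ∏ e ∈ T', w e)) *
        (lam * (∏ _e ∈ T, lam) * φ (lam * x r) *
          ∏ e ∈ T, φ (lam * (x (head e) - x (tail e))))) /
      (∑ T' ∈ Finset.univ.filter (fun s : Finset E => IsSpanningTree head tail s),
        ((∏ e ∈ T', w e) /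
          (∑ T'' ∈ Finset.univ.filter (fun s : Finset E => IsSpanningTree head tail s),
            ∏ e ∈ T'', w e)) *
        (lam * (∏ _e ∈ T', lam) * φ (lam * x r) *
          ∏ e ∈ T', φ (lam * (x (head e) - x (tail e)))))
      -- equals the weighted-random-spanning-tree law with conjugated weights
      = (∏ e ∈ T, w e * φ (lam * (x (head e) - x (tail e)))) /
        (∑ T' ∈ Finset.univ.filter (fun s : Finset E => IsSpanningTree head tail s),
          ∏ e ∈ T', w e * φ (lam * (x (head e) - x (tail e)))) := by
  intro T hT
  classical
  set S := Finset.univ.filter (fun s : Finset E => IsSpanningTree head tail s) with hS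
  have hA : 0 < ∑ T' ∈ S, ∏ e ∈ T', w e :=
    Finset.sum_pos (fun T' _ => Finset.prod_pos fun e _ => hw e) ⟨T, hT⟩
  set A := ∑ T' ∈ S, ∏ e ∈ T', w e with hAdef
  set c := lam * lam ^ (Fintype.card V - 1) * φ (lam * x r) with hc
  have hcpos : 0 < c := mul_pos (mul_pos hlam (pow_pos hlam _)) (hφpos _)
  have hcA : c / A ≠ 0 := div_ne_zero hcpos.ne' hA.ne'
  have key : ∀ T' ∈ S, ((∏ e ∈ T', w e) / A) *
      (lam * (∏ _e ∈ T', lam) * φ (lam * x r) *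
        ∏ e ∈ T', φ (lam * (x (head e) - x (tail e)))) =
      (c / A) * ∏ e ∈ T', (w e * φ (lam * (x (head e) - x (tail e)))) := by
    intro T' hT'
    have hcard := span_card head tail hne hinj (Finset.mem_filter.mp hT').2
    have hprod : (∏ _e ∈ T', lam) = lam ^ (Fintype.card V - 1) := by
      rw [Finset.prod_const]
      congr 1
      omega
    rw [hprod, Finset.prod_mul_distrib, hc]
    ring
  rw [key T hT, Finset.sum_congr rfl key, ← Finset.mul_sum,
    mul_div_mul_left _ _ hcA]
end
end

section
/- For every γ > 0 and every z ∈ ℝ, the Laplace density with rate γ is a Gaussian scale mixture with exponential mixing on the variance: ∫₀^∞ (2πτ)^{−1/2} exp(−z²/(2τ)) · (γ²/2) exp(−(γ²/2)τ) dτ = (γ/2) exp(−γ|z|). -/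
open MeasureTheory Real Set


lemma glasser {a b : ℝ} (ha : 0 < a) (hb : 0 < b) :
    ∫ s in Ioi (0:ℝ), Real.exp (-(b*s - a/s)^2) = Real.sqrt π / (2*b) := by
  set φ : ℝ → ℝ := fun s => b*s - a/s with hφ
  have hderiv : ∀ x ∈ Ioi (0:ℝ), HasDerivWithinAt φ (b + a/x^2) (Ioi 0) x := by
    intro x hx
    have hx0 : x ≠ 0 := ne_of_gt hx
    have h1 : HasDerivAt (fun s : ℝ => b*s - a*s⁻¹) (b*1 - a * (-(x^2)⁻¹)) x :=
      ((hasDerivAt_id x).const_mul b).sub ((hasDerivAt_inv hx0).const_mul a)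
    have h2 : (fun s : ℝ => b*s - a*s⁻¹) = φ := by
      funext s; simp [hφ, div_eq_mul_inv]
    rw [h2] at h1
    have : b*1 - a * (-(x^2)⁻¹) = b + a/x^2 := by field_simp; ring
    rw [this] at h1
    exact h1.hasDerivWithinAt
  have hmono : StrictMonoOn φ (Ioi (0:ℝ)) := by
    intro x hx y hy hxy
    have h1 : a/y < a/x := div_lt_div_of_pos_left ha hx hxy
    have : b*x < b*y := by nlinarith [(show (0:ℝ) < x from hx).le]
    simp only [hφ]; linarith
  have hinj : InjOn φ (Ioi (0:ℝ)) := hmono.injOn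
  have hsurj : φ '' Ioi (0:ℝ) = univ := by
    ext t
    simp only [mem_univ, iff_true, mem_image]
    set r := Real.sqrt (t^2 + 4*a*b) with hr
    have hr2 : r^2 = t^2 + 4*a*b := Real.sq_sqrt (by positivity)
    have hrt : |t| < r := by
      rw [← Real.sqrt_sq_eq_abs]
      exact Real.sqrt_lt_sqrt (by positivity) (by nlinarith)
    have hs0 : 0 < (t + r)/(2*b) := by
      have h3 : 0 < t + r := by linarith [neg_le_abs t]
      positivity
    refine ⟨(t + r)/(2*b), hs0, ?_⟩
    have htr : 0 < t + r := by linarith [neg_le_abs t]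
    simp only [hφ]
    have htr' : t + r ≠ 0 := ne_of_gt htr
    field_simp
    nlinarith [hr2]
  have hcont : ContinuousOn (fun x => Real.exp (-(φ x)^2)) (Ioi (0:ℝ)) := by
    have hφc : ContinuousOn φ (Ioi (0:ℝ)) :=
      (continuous_const.mul continuous_id).continuousOn.sub
        (continuousOn_const.div continuousOn_id (fun x hx => ne_of_gt hx))
    exact Real.continuous_exp.comp_continuousOn ((hφc.pow 2).neg)
  -- change of variables t = φ x
  have h1 : ∫ x in Ioi (0:ℝ), |b + a/x^2| • Real.exp (-(φ x)^2) = Real.sqrt π := by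
    rw [← integral_image_eq_integral_abs_deriv_smul measurableSet_Ioi hderiv hinj
      (fun t => Real.exp (-t^2)), hsurj, setIntegral_univ]
    have := integral_gaussian 1
    simpa using this
  -- integrability of the big integrand
  have hInt1 : IntegrableOn (fun x => |b + a/x^2| • Real.exp (-(φ x)^2)) (Ioi (0:ℝ)) := by
    rw [← integrableOn_image_iff_integrableOn_abs_deriv_smul measurableSet_Ioi hderiv hinj
      (fun t => Real.exp (-t^2)), hsurj]
    have : Integrable (fun t : ℝ => Real.exp (-t^2)) := by
      simpa using integrable_exp_neg_mul_sq (by norm_num : (0:ℝ) < 1)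
    exact this.integrableOn
  -- integrability of exp(-(φ x)^2)
  have hI : IntegrableOn (fun x => Real.exp (-(φ x)^2)) (Ioi (0:ℝ)) := by
    refine Integrable.mono' (hInt1.smul (b⁻¹)) (hcont.aestronglyMeasurable measurableSet_Ioi) ?_
    rw [ae_restrict_iff' measurableSet_Ioi]
    refine Filter.Eventually.of_forall (fun x hx => ?_)
    have hx0 : (0:ℝ) < x := hx
    have habs : |b + a/x^2| = b + a/x^2 := abs_of_pos (by positivity)
    simp only [Real.norm_eq_abs, abs_of_pos (Real.exp_pos _), Pi.smul_apply, smul_eq_mul, habs]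
    rw [← mul_assoc]
    have hle : 1 ≤ b⁻¹ * (b + a/x^2) := by
      rw [le_inv_mul_iff₀ hb]
      have : 0 ≤ a/x^2 := by positivity
      linarith
    nlinarith [Real.exp_pos (-(φ x)^2), hle]
  -- integrability of (a/x^2) * exp(-(φ x)^2)
  have hInt2 : IntegrableOn (fun x => a/x^2 * Real.exp (-(φ x)^2)) (Ioi (0:ℝ)) := by
    refine MeasureTheory.IntegrableOn.congr_fun (hInt1.sub (hI.const_mul b)) (fun x hx => ?_) measurableSet_Ioi
    have hx0 : (0:ℝ) < x := hx
    have habs : |b + a/x^2| = b + a/x^2 := abs_of_pos (by positivity)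
    simp only [smul_eq_mul, habs, Pi.sub_apply]
    ring
  -- second substitution: x ↦ a/(b x)
  have hψeq : (fun s : ℝ => a/(b*s)) = fun s : ℝ => (a/b) * s⁻¹ := by
    funext s; rw [← div_div, div_eq_mul_inv (a/b) s]
  have hψderiv : ∀ x ∈ Ioi (0:ℝ), HasDerivWithinAt (fun s : ℝ => a/(b*s))
      ((a/b) * (-(x^2)⁻¹)) (Ioi 0) x := by
    intro x hx
    rw [hψeq]
    exact ((hasDerivAt_inv (ne_of_gt hx)).const_mul (a/b)).hasDerivWithinAt
  have hψinj : InjOn (fun s : ℝ => a/(b*s)) (Ioi (0:ℝ)) := by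
    intro x hx y hy h
    have hx0 : x ≠ 0 := ne_of_gt hx
    have hy0 : y ≠ 0 := ne_of_gt hy
    have ha0 : a ≠ 0 := ne_of_gt ha
    have hb0 : b ≠ 0 := ne_of_gt hb
    field_simp at h
    exact h.symm
  have hψim : (fun s : ℝ => a/(b*s)) '' Ioi (0:ℝ) = Ioi (0:ℝ) := by
    ext u
    constructor
    · rintro ⟨s, hs, rfl⟩
      have : (0:ℝ) < s := hs
      exact mem_Ioi.mpr (by positivity)
    · intro hu
      have hu0 : (0:ℝ) < u := hu
      refine ⟨a/(b*u), mem_Ioi.mpr (by positivity), ?_⟩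
      field_simp
  have h2 : ∫ x in Ioi (0:ℝ), Real.exp (-(φ x)^2)
      = ∫ x in Ioi (0:ℝ), |(a/b) * (-(x^2)⁻¹)| • Real.exp (-(φ (a/(b*x)))^2) := by
    conv_lhs => rw [← hψim]
    exact integral_image_eq_integral_abs_deriv_smul measurableSet_Ioi hψderiv hψinj
      (fun u => Real.exp (-(φ u)^2))
  have h3 : ∫ x in Ioi (0:ℝ), |(a/b) * (-(x^2)⁻¹)| • Real.exp (-(φ (a/(b*x)))^2)
      = b⁻¹ * ∫ x in Ioi (0:ℝ), a/x^2 * Real.exp (-(φ x)^2) := by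
    rw [← integral_const_mul]
    refine setIntegral_congr_fun measurableSet_Ioi (fun x hx => ?_)
    have hx0 : (0:ℝ) < x := hx
    have hφψ : φ (a/(b*x)) = -(φ x) := by
      simp only [hφ]
      have hx0' : x ≠ 0 := ne_of_gt hx0
      have ha0 : a ≠ 0 := ne_of_gt ha
      have hb0 : b ≠ 0 := ne_of_gt hb
      field_simp
      ring
    rw [hφψ, neg_sq, smul_eq_mul]
    rw [mul_neg, abs_neg, abs_of_nonneg (by positivity : (0:ℝ) ≤ a/b * (x^2)⁻¹)]
    field_simp
  -- put everything together
  have key : Real.sqrt π = 2 * b * ∫ x in Ioi (0:ℝ), Real.exp (-(φ x)^2) := by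
    rw [← h1]
    have hsplit : ∫ x in Ioi (0:ℝ), |b + a/x^2| • Real.exp (-(φ x)^2)
        = (∫ x in Ioi (0:ℝ), b * Real.exp (-(φ x)^2))
          + ∫ x in Ioi (0:ℝ), a/x^2 * Real.exp (-(φ x)^2) := by
      rw [← integral_add (hI.const_mul b) hInt2]
      refine setIntegral_congr_fun measurableSet_Ioi (fun x hx => ?_)
      have hx0 : (0:ℝ) < x := hx
      have habs : |b + a/x^2| = b + a/x^2 := abs_of_pos (by positivity)
      simp only [smul_eq_mul, habs]
      ring
    rw [hsplit, integral_const_mul]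
    have hJ : ∫ x in Ioi (0:ℝ), a/x^2 * Real.exp (-(φ x)^2)
        = b * ∫ x in Ioi (0:ℝ), Real.exp (-(φ x)^2) := by
      have := h2.trans h3
      have hb0 : b ≠ 0 := ne_of_gt hb
      field_simp at this ⊢
      linarith [this]
    rw [hJ]; ring
  have hb0 : (2:ℝ) * b ≠ 0 := by positivity
  rw [eq_div_iff hb0, mul_comm]
  exact key.symm

lemma glasser' {a b : ℝ} (ha : 0 ≤ a) (hb : 0 < b) :
    ∫ s in Ioi (0:ℝ), Real.exp (-(a^2/s^2 + b^2*s^2))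
      = Real.sqrt π / (2*b) * Real.exp (-(2*a*b)) := by
  rcases eq_or_lt_of_le ha with rfl|ha'
  · have h0 : ∫ s in Ioi (0:ℝ), Real.exp (-((0:ℝ)^2/s^2 + b^2*s^2))
        = ∫ s in Ioi (0:ℝ), Real.exp (-b^2 * s^2) := by
      refine setIntegral_congr_fun measurableSet_Ioi (fun s hs => ?_)
      have hs0 : s ≠ 0 := ne_of_gt hs
      norm_num
    rw [h0, integral_gaussian_Ioi, Real.sqrt_div Real.pi_nonneg, Real.sqrt_sq hb.le]
    norm_num
    ring
  · have hpt : ∀ s ∈ Ioi (0:ℝ), Real.exp (-(a^2/s^2 + b^2*s^2))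
        = Real.exp (-(2*a*b)) * Real.exp (-(b*s - a/s)^2) := by
      intro s hs
      rw [← Real.exp_add]
      congr 1
      have hs0 : s ≠ 0 := ne_of_gt hs
      field_simp
      ring
    rw [setIntegral_congr_fun measurableSet_Ioi hpt, integral_const_mul, glasser ha' hb]
    ring

/-- **Laplace distribution as a Gaussian scale mixture.** For every `γ > 0` and `z ∈ ℝ`,
mixing a zero-mean Gaussian with variance `τ` over `τ ~ Exp(γ²/2)` yields the Laplace
density with rate `γ`:
`∫₀^∞ (2πτ)^{−1/2} e^{−z²/(2τ)} (γ²/2) e^{−(γ²/2)τ} dτ = (γ/2) e^{−γ|z|}`. -/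
theorem laplace_gaussian_scale_mixture (γ : ℝ) (hγ : 0 < γ) (z : ℝ) :
    (∫ τ in Set.Ioi (0 : ℝ),
        (2 * Real.pi * τ) ^ (-(1 : ℝ)/2) * Real.exp (-z ^ 2 / (2 * τ)) *
          (γ ^ 2 / 2 * Real.exp (-(γ ^ 2 / 2) * τ)))
      = γ / 2 * Real.exp (-γ * |z|) := by
  have himg : (fun x : ℝ => x^2) '' Set.Ioi 0 = Set.Ioi 0 := by
    ext τ
    constructor
    · rintro ⟨x, hx, rfl⟩
      have : (0:ℝ) < x := hx
      exact mem_Ioi.mpr (by positivity)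
    · intro hτ
      have hτ0 : (0:ℝ) < τ := hτ
      exact ⟨Real.sqrt τ, mem_Ioi.mpr (Real.sqrt_pos.mpr hτ0), Real.sq_sqrt hτ0.le⟩
  have hderiv : ∀ x ∈ Set.Ioi (0:ℝ),
      HasDerivWithinAt (fun x : ℝ => x^2) (2*x) (Set.Ioi 0) x := by
    intro x hx
    simpa using (hasDerivAt_pow 2 x).hasDerivWithinAt
  have hinj : Set.InjOn (fun x : ℝ => x^2) (Set.Ioi 0) := by
    intro x hx y hy h
    have hx0 : (0:ℝ) < x := hx
    have hy0 : (0:ℝ) < y := hy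
    simp only at h
    nlinarith
  have step := integral_image_eq_integral_abs_deriv_smul measurableSet_Ioi hderiv hinj
      (fun τ => (2 * Real.pi * τ) ^ (-(1 : ℝ)/2) * Real.exp (-z ^ 2 / (2 * τ)) *
          (γ ^ 2 / 2 * Real.exp (-(γ ^ 2 / 2) * τ)))
  rw [himg] at step
  rw [step]
  have hπ2 : (0:ℝ) < 2 * π := by positivity
  have hs2 : Real.sqrt 2 * Real.sqrt 2 = 2 := Real.mul_self_sqrt (by norm_num)
  have hpt : ∀ x ∈ Set.Ioi (0:ℝ),
      |2*x| • ((2 * π * x^2) ^ (-(1 : ℝ)/2) * Real.exp (-z ^ 2 / (2 * x^2)) *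
          (γ ^ 2 / 2 * Real.exp (-(γ ^ 2 / 2) * x^2)))
      = γ^2 / Real.sqrt (2*π) *
          Real.exp (-((|z|/Real.sqrt 2)^2/x^2 + (γ/Real.sqrt 2)^2 * x^2)) := by
    intro x hx
    have hx0 : (0:ℝ) < x := hx
    have hrp : (2 * π * x^2) ^ (-(1 : ℝ)/2) = (Real.sqrt (2*π) * x)⁻¹ := by
      have hy0 : (0:ℝ) < Real.sqrt (2*π) * x := by positivity
      rw [show 2*π*x^2 = (Real.sqrt (2*π) * x)^2 by
        rw [mul_pow, Real.sq_sqrt hπ2.le]]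
      rw [← Real.rpow_natCast (Real.sqrt (2*π) * x) 2, ← Real.rpow_mul hy0.le,
        show ((2:ℕ):ℝ) * (-(1:ℝ)/2) = -1 by norm_num, Real.rpow_neg_one]
    have e1 : -z^2/(2*x^2) + (-(γ^2/2) * x^2)
        = -((|z|/Real.sqrt 2)^2/x^2 + (γ/Real.sqrt 2)^2 * x^2) := by
      rw [div_pow, div_pow, sq_abs, Real.sq_sqrt (by norm_num : (0:ℝ) ≤ 2)]
      ring
    rw [hrp, smul_eq_mul, abs_of_pos (by positivity : (0:ℝ) < 2*x)]
    rw [show (2*x) * ((Real.sqrt (2*π) * x)⁻¹ * Real.exp (-z ^ 2 / (2 * x^2)) *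
          (γ ^ 2 / 2 * Real.exp (-(γ ^ 2 / 2) * x^2)))
        = (2*x) * (Real.sqrt (2*π) * x)⁻¹ * (γ^2/2) *
          Real.exp (-z^2/(2*x^2) + (-(γ^2/2) * x^2)) by
      rw [Real.exp_add]; ring]
    rw [e1]
    congr 1
    have hsq : Real.sqrt (2*π) ≠ 0 := by positivity
    field_simp
  rw [setIntegral_congr_fun measurableSet_Ioi hpt, integral_const_mul,
    glasser' (by positivity : (0:ℝ) ≤ |z|/Real.sqrt 2) (by positivity : (0:ℝ) < γ/Real.sqrt 2)]
  have hexp : -(2 * (|z|/Real.sqrt 2) * (γ/Real.sqrt 2)) = -γ * |z| := by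
    field_simp
    nlinarith [hs2, abs_nonneg z]
  rw [hexp]
  have hc : γ^2 / Real.sqrt (2*π) * (Real.sqrt π / (2 * (γ/Real.sqrt 2))) = γ/2 := by
    rw [Real.sqrt_mul (by norm_num : (0:ℝ) ≤ 2) π]
    have h1 : Real.sqrt π ≠ 0 := by positivity
    have h2 : Real.sqrt 2 ≠ 0 := by positivity
    field_simp
  rw [← mul_assoc, hc]
end
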